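/- Dirac confluence criterion: if for every element a of A and distributions E, F with E ⇐_P* [(1,a)] ⇒_P* F there exists C with E ↠* C ↞* F, then the PARS is distribution confluent (↠ = ⇒_P ∪ ≈ is confluent). -/

import Mathlib

open Relation
open scoped NNReal

abbrev PDist (A : Type) := List (ℝ≥0 × A)

namespace PPARS

variable {A X : Type}

/-- Total weight of a list distribution. -/
def weight (D : PDist A) : ℝ≥0 := (D.map Prod.fst).sum

/-- Scale every weight of a distribution by `α`. -/
def scale (α : ℝ≥0) (D : PDist A) : PDist A := D.map (fun pa => (α * pa.1, pa.2))

open Classical in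
/-- Total weight that `D` assigns to the element `a`. -/
noncomputable def wt (D : PDist A) (a : A) : ℝ≥0 :=
  (D.map (fun pa => if pa.2 = a then pa.1 else 0)).sum

/-- The Flip rule, closed under list contexts. -/
inductive FlipS : PDist A → PDist A → Prop
  | mk (E₁ E₂ : PDist A) (p q : ℝ≥0) (a b : A) :
      FlipS (E₁ ++ [(p,a),(q,b)] ++ E₂) (E₁ ++ [(q,b),(p,a)] ++ E₂)

/-- The Join rule, closed under list contexts. -/
inductive JoinS : PDist A → PDist A → Prop
  | mk (E₁ E₂ : PDist A) (p q : ℝ≥0) (a : A) :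
      JoinS (E₁ ++ [(p,a),(q,a)] ++ E₂) (E₁ ++ [(p+q,a)] ++ E₂)

/-- The Split rule, closed under list contexts. -/
inductive SplitS : PDist A → PDist A → Prop
  | mk (E₁ E₂ : PDist A) (p q : ℝ≥0) (a : A) :
      SplitS (E₁ ++ [(p+q,a)] ++ E₂) (E₁ ++ [(p,a),(q,a)] ++ E₂)

/-- One `∼`-step: congruence closure of Flip, Join and Split. -/
def SimStep (D E : PDist A) : Prop := FlipS D E ∨ JoinS D E ∨ SplitS D E

/-- One Flip-or-Join step. -/
def FJ (D E : PDist A) : Prop := FlipS D E ∨ JoinS D E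

/-- Distribution equivalence `≈`. -/
def DEquiv : PDist A → PDist A → Prop := ReflTransGen SimStep

/-- Parallel evolution `⇒_P` for a PARS relation `R`. -/
inductive PEvol (R : A → PDist A → Prop) : PDist A → PDist A → Prop
  | nil : PEvol R [] []
  | keep {ds ds' : PDist A} (p : ℝ≥0) (a : A) :
      PEvol R ds ds' → PEvol R ((p,a) :: ds) ((p,a) :: ds')
  | evolve {a : A} {D ds ds' : PDist A} (p : ℝ≥0) :
      R a D → PEvol R ds ds' → PEvol R ((p,a) :: ds) (scale p D ++ ds')

/-- Proper parallel evolution `⇒_P¹`: at least one element evolves. -/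
inductive PEvol1 (R : A → PDist A → Prop) : PDist A → PDist A → Prop
  | evolve {a : A} {D ds ds' : PDist A} (p : ℝ≥0) :
      R a D → PEvol R ds ds' → PEvol1 R ((p,a) :: ds) (scale p D ++ ds')
  | keep {ds ds' : PDist A} (p : ℝ≥0) (a : A) :
      PEvol1 R ds ds' → PEvol1 R ((p,a) :: ds) ((p,a) :: ds')

/-- The determinisation relation `↠ = ⇒_P ∪ ≈`. -/
def Red (R : A → PDist A → Prop) (D E : PDist A) : Prop := PEvol R D E ∨ DEquiv D E

/-- `R` defines a PARS: successor distributions are normalised. -/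
def IsPARS (R : A → PDist A → Prop) : Prop := ∀ a D, R a D → weight D = 1

/-- A terminal element has no successor distribution. -/
def Terminal (R : A → PDist A → Prop) (a : A) : Prop := ∀ D, ¬ R a D

/-- A terminal distribution contains only terminal elements. -/
def TerminalD (R : A → PDist A → Prop) (D : PDist A) : Prop := ∀ pa ∈ D, Terminal R pa.2

/-- Classical confluence of a relation. -/
def Confluent (r : X → X → Prop) : Prop :=
  ∀ a b c, ReflTransGen r a b → ReflTransGen r a c →
    ∃ d, ReflTransGen r b d ∧ ReflTransGen r c d

/-- Raw (finite) computation trees. -/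
inductive CTree (A : Type) where
  | leaf (a : A)
  | node (a : A) (cs : List (ℝ≥0 × CTree A))

def CTree.root : CTree A → A
  | .leaf a => a
  | .node a _ => a

/-- `IsTree R t a`: `t` is a computation tree of the PARS `R` with root `a`. -/
inductive IsTree (R : A → PDist A → Prop) : CTree A → A → Prop
  | leaf (a : A) : IsTree R (.leaf a) a
  | node (a : A) (cs : List (ℝ≥0 × CTree A)) :
      R a (cs.map fun x => (x.1, x.2.root)) →
      (∀ x ∈ cs, IsTree R x.2 x.2.root) →
      IsTree R (.node a cs) a

mutual
/-- Support of a computation tree. -/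
def supp : CTree A → PDist A
  | .leaf a => [(1, a)]
  | .node _ cs => suppL cs
def suppL : List (ℝ≥0 × CTree A) → PDist A
  | [] => []
  | (p, t) :: ts => scale p (supp t) ++ suppL ts
end

/-- A tree is maximal when all its leaves are terminal elements. -/
inductive MaximalT (R : A → PDist A → Prop) : CTree A → Prop
  | leaf (a : A) : Terminal R a → MaximalT R (.leaf a)
  | node (a : A) (cs : List (ℝ≥0 × CTree A)) :
      (∀ x ∈ cs, MaximalT R x.2) → MaximalT R (.node a cs)

end PPARS


namespace PPARS
variable {A : Type} {R : A → PDist A → Prop}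

/-! ### scale and weight basics -/

@[simp] lemma scale_nil (α : ℝ≥0) : scale α ([] : PDist A) = [] := rfl
@[simp] lemma scale_cons (α p : ℝ≥0) (a : A) (D : PDist A) :
    scale α ((p,a) :: D) = (α * p, a) :: scale α D := rfl
@[simp] lemma scale_append (α : ℝ≥0) (D E : PDist A) :
    scale α (D ++ E) = scale α D ++ scale α E := List.map_append
lemma scale_scale (α β : ℝ≥0) (D : PDist A) : scale α (scale β D) = scale (α * β) D := by
  induction D with
  | nil => rfl
  | cons x D ih => cases x; simp [scale, mul_assoc] at *
@[simp] lemma scale_one (D : PDist A) : scale 1 D = D := by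
  induction D with
  | nil => rfl
  | cons x D ih => cases x; simp [scale] at *
@[simp] lemma weight_nil : weight ([] : PDist A) = 0 := rfl
@[simp] lemma weight_cons (p : ℝ≥0) (a : A) (D : PDist A) :
    weight ((p,a) :: D) = p + weight D := rfl
@[simp] lemma weight_append (D E : PDist A) : weight (D ++ E) = weight D + weight E := by
  simp [weight]

/-! ### PEvol basics -/

lemma PEvol.refl : ∀ D : PDist A, PEvol R D D
  | [] => PEvol.nil
  | (p,a) :: D => PEvol.keep p a (PEvol.refl D)

lemma PEvol.append {D₁ E₁ D₂ E₂ : PDist A} (h₁ : PEvol R D₁ E₁) (h₂ : PEvol R D₂ E₂) :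
    PEvol R (D₁ ++ D₂) (E₁ ++ E₂) := by
  induction h₁ with
  | nil => exact h₂
  | keep p a _ ih => exact PEvol.keep p a ih
  | evolve p hr _ ih => rw [List.append_assoc]; exact PEvol.evolve p hr ih

lemma PEvol.append_inv {D₁ D₂ E : PDist A} (h : PEvol R (D₁ ++ D₂) E) :
    ∃ E₁ E₂, E = E₁ ++ E₂ ∧ PEvol R D₁ E₁ ∧ PEvol R D₂ E₂ := by
  induction D₁ generalizing E with
  | nil => exact ⟨[], E, rfl, PEvol.nil, h⟩
  | cons x D₁ ih =>
    cases h with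
    | keep p a h =>
      obtain ⟨E₁, E₂, rfl, h₁, h₂⟩ := ih h
      exact ⟨(p,a) :: E₁, E₂, rfl, PEvol.keep p a h₁, h₂⟩
    | evolve p hr h =>
      obtain ⟨E₁, E₂, rfl, h₁, h₂⟩ := ih h
      exact ⟨scale p _ ++ E₁, E₂, by rw [List.append_assoc], PEvol.evolve p hr h₁, h₂⟩

lemma PEvol.smul {D E : PDist A} (α : ℝ≥0) (h : PEvol R D E) :
    PEvol R (scale α D) (scale α E) := by
  induction h with
  | nil => exact PEvol.nil
  | keep p a _ ih => exact PEvol.keep _ a ih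
  | evolve p hr _ ih =>
    simp only [scale_cons, scale_append, scale_scale]
    exact PEvol.evolve _ hr ih

lemma PEvol.smul_inv {D : PDist A} (α : ℝ≥0) {F : PDist A} (h : PEvol R (scale α D) F) :
    ∃ E, F = scale α E ∧ PEvol R D E := by
  induction D generalizing F with
  | nil => cases h; exact ⟨[], rfl, PEvol.nil⟩
  | cons x D ih =>
    obtain ⟨p, a⟩ := x
    rw [scale_cons] at h
    cases h with
    | keep _ _ h =>
      obtain ⟨E, rfl, hE⟩ := ih h
      exact ⟨(p,a) :: E, rfl, PEvol.keep p a hE⟩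
    | evolve _ hr h =>
      obtain ⟨E, rfl, hE⟩ := ih h
      refine ⟨PPARS.scale p _ ++ E, ?_, PEvol.evolve p hr hE⟩
      rw [scale_append, scale_scale]

lemma PEvol.nil_inv {E : PDist A} (h : PEvol R [] E) : E = [] := by cases h; rfl

/-- star versions -/
lemma PEvolS.append {D₁ E₁ D₂ E₂ : PDist A} (h₁ : ReflTransGen (PEvol R) D₁ E₁)
    (h₂ : ReflTransGen (PEvol R) D₂ E₂) : ReflTransGen (PEvol R) (D₁ ++ D₂) (E₁ ++ E₂) := by
  induction h₁ with
  | refl =>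
    induction h₂ with
    | refl => exact ReflTransGen.refl
    | tail _ h ih => exact ih.tail (PEvol.append (PEvol.refl _) h)
  | tail _ h ih => exact ih.tail (PEvol.append h (PEvol.refl _))

lemma PEvolS.smul {D E : PDist A} (α : ℝ≥0) (h : ReflTransGen (PEvol R) D E) :
    ReflTransGen (PEvol R) (scale α D) (scale α E) := by
  induction h with
  | refl => exact ReflTransGen.refl
  | tail _ h ih => exact ih.tail (PEvol.smul α h)

lemma PEvolS.nil_inv {E : PDist A} (h : ReflTransGen (PEvol R) [] E) : E = [] := by
  induction h with
  | refl => rfl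
  | tail _ h ih => subst ih; exact PEvol.nil_inv h

lemma PEvolS.append_inv {D₁ D₂ E : PDist A} (h : ReflTransGen (PEvol R) (D₁ ++ D₂) E) :
    ∃ E₁ E₂, E = E₁ ++ E₂ ∧ ReflTransGen (PEvol R) D₁ E₁ ∧ ReflTransGen (PEvol R) D₂ E₂ := by
  induction h with
  | refl => exact ⟨D₁, D₂, rfl, ReflTransGen.refl, ReflTransGen.refl⟩
  | tail _ h ih =>
    obtain ⟨E₁, E₂, rfl, h₁, h₂⟩ := ih
    obtain ⟨F₁, F₂, rfl, g₁, g₂⟩ := PEvol.append_inv h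
    exact ⟨F₁, F₂, rfl, h₁.tail g₁, h₂.tail g₂⟩

lemma PEvolS.smul_inv {D : PDist A} (α : ℝ≥0) {F : PDist A}
    (h : ReflTransGen (PEvol R) (scale α D) F) :
    ∃ E, F = scale α E ∧ ReflTransGen (PEvol R) D E := by
  induction h with
  | refl => exact ⟨D, rfl, ReflTransGen.refl⟩
  | tail _ h ih =>
    obtain ⟨E, rfl, hE⟩ := ih
    obtain ⟨F, rfl, hF⟩ := PEvol.smul_inv α h
    exact ⟨F, rfl, hE.tail hF⟩

lemma PEvolS.single_src {p : ℝ≥0} {a : A} {E : PDist A}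
    (h : ReflTransGen (PEvol R) [(p,a)] E) :
    ∃ E', E = scale p E' ∧ ReflTransGen (PEvol R) [(1,a)] E' := by
  have : ([(p,a)] : PDist A) = scale p [(1,a)] := by simp
  rw [this] at h
  exact PEvolS.smul_inv p h


/-! ### Refinement -/

inductive Ref : PDist A → PDist A → Prop
  | nil : Ref [] []
  | cons {p : ℝ≥0} {a : A} {ds E : PDist A} (B : PDist A) (hne : B ≠ [])
      (hlab : ∀ x ∈ B, x.2 = a) (hsum : weight B = p) (h : Ref ds E) :
      Ref ((p,a) :: ds) (B ++ E)

lemma Ref.refl : ∀ D : PDist A, Ref D D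
  | [] => Ref.nil
  | (p,a) :: D => Ref.cons (p := p) (a := a) [(p,a)] (by simp) (by simp) (by simp) (Ref.refl D)

lemma Ref.append : ∀ {D₁ M₁ D₂ M₂ : PDist A}, Ref D₁ M₁ → Ref D₂ M₂ → Ref (D₁ ++ D₂) (M₁ ++ M₂) := by
  intro D₁ M₁ D₂ M₂ h₁ h₂
  induction h₁ with
  | nil => exact h₂
  | cons B hne hlab hsum _ ih =>
    rw [List.cons_append, List.append_assoc]
    exact Ref.cons B hne hlab hsum ih

lemma Ref.append_inv {D₁ D₂ M : PDist A} (h : Ref (D₁ ++ D₂) M) :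
    ∃ M₁ M₂, M = M₁ ++ M₂ ∧ Ref D₁ M₁ ∧ Ref D₂ M₂ := by
  induction D₁ generalizing M with
  | nil => exact ⟨[], M, rfl, Ref.nil, h⟩
  | cons x D₁ ih =>
    obtain ⟨p, a⟩ := x
    cases h with
    | cons B hne hlab hsum h =>
      obtain ⟨M₁, M₂, rfl, h₁, h₂⟩ := ih h
      exact ⟨B ++ M₁, M₂, by rw [List.append_assoc], Ref.cons B hne hlab hsum h₁, h₂⟩

lemma Ref.ne_nil {D M : PDist A} (h : Ref D M) (hD : D ≠ []) : M ≠ [] := by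
  cases h with
  | nil => exact absurd rfl hD
  | cons B hne _ _ _ => simp [hne]

lemma Ref.mem_label {D M : PDist A} (h : Ref D M) :
    ∀ y ∈ M, ∃ x ∈ D, y.2 = x.2 := by
  induction h with
  | nil => intro y hy; cases hy
  | cons B hne hlab hsum _ ih =>
    intro y hy
    rcases List.mem_append.1 hy with hy | hy
    · exact ⟨_, List.mem_cons_self, hlab y hy⟩
    · obtain ⟨x, hx, hxy⟩ := ih y hy
      exact ⟨x, List.mem_cons_of_mem _ hx, hxy⟩

lemma Ref.weight_eq {D M : PDist A} (h : Ref D M) : weight M = weight D := by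
  induction h with
  | nil => rfl
  | cons B hne hlab hsum _ ih => simp [hsum, ih]

lemma Ref.length_le {D M : PDist A} (h : Ref D M) : D.length ≤ M.length := by
  induction h with
  | nil => simp
  | cons B hne hlab hsum _ ih =>
    have : 1 ≤ B.length := List.length_pos_iff.2 hne
    simp only [List.length_cons, List.length_append]
    omega

lemma Ref.trans {X Y Z : PDist A} (h₁ : Ref X Y) (h₂ : Ref Y Z) : Ref X Z := by
  induction h₁ generalizing Z with
  | nil => cases h₂; exact Ref.nil
  | cons B hne hlab hsum h ih =>
    obtain ⟨Z₁, Z₂, rfl, g₁, g₂⟩ := Ref.append_inv h₂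
    refine Ref.cons Z₁ (g₁.ne_nil hne) ?_ ?_ (ih g₂)
    · intro y hy
      obtain ⟨x, hx, hxy⟩ := g₁.mem_label y hy
      rw [hxy]; exact hlab x hx
    · rw [g₁.weight_eq, hsum]

lemma Ref.perm_transport {X Y X' : PDist A} (h : Ref X Y) (hp : X.Perm X') :
    ∃ Y', Ref X' Y' ∧ Y.Perm Y' := by
  induction hp generalizing Y with
  | nil => cases h; exact ⟨[], Ref.nil, List.Perm.refl _⟩
  | cons x _ ih =>
    obtain ⟨p, a⟩ := x
    cases h with
    | cons B hne hlab hsum h =>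
      obtain ⟨E', hE', hpE⟩ := ih h
      exact ⟨B ++ E', Ref.cons B hne hlab hsum hE', hpE.append_left B⟩
  | swap x y _ =>
    obtain ⟨p, a⟩ := x
    obtain ⟨q, b⟩ := y
    cases h with
    | cons B₂ hne₂ hlab₂ hsum₂ h =>
      cases h with
      | cons B₁ hne₁ hlab₁ hsum₁ h =>
        rename_i E
        refine ⟨B₁ ++ B₂ ++ E, ?_, ?_⟩
        · rw [List.append_assoc]
          exact Ref.cons B₁ hne₁ hlab₁ hsum₁ (Ref.cons B₂ hne₂ hlab₂ hsum₂ h)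
        · have := (List.perm_append_comm (l₁ := B₂) (l₂ := B₁)).append_right E
          simpa [List.append_assoc] using this
  | trans _ _ ih₁ ih₂ =>
    obtain ⟨Y₁, hY₁, hp₁⟩ := ih₁ h
    obtain ⟨Y₂, hY₂, hp₂⟩ := ih₂ hY₁
    exact ⟨Y₂, hY₂, hp₁.trans hp₂⟩

/-! ### Split-perm -/

def SP (D E : PDist A) : Prop := ∃ M, Ref D M ∧ M.Perm E

lemma SP.refl (D : PDist A) : SP D D := ⟨D, Ref.refl D, List.Perm.refl D⟩

lemma SP.of_ref {D E : PDist A} (h : Ref D E) : SP D E := ⟨E, h, List.Perm.refl E⟩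

lemma SP.of_perm {D E : PDist A} (h : D.Perm E) : SP D E := ⟨D, Ref.refl D, h⟩

lemma SP.trans {X Y Z : PDist A} (h₁ : SP X Y) (h₂ : SP Y Z) : SP X Z := by
  obtain ⟨M₁, r₁, p₁⟩ := h₁
  obtain ⟨M₂, r₂, p₂⟩ := h₂
  obtain ⟨M₃, r₃, p₃⟩ := r₂.perm_transport p₁.symm
  exact ⟨M₃, r₁.trans r₃, p₃.symm.trans p₂⟩

lemma SP.append {D₁ E₁ D₂ E₂ : PDist A} (h₁ : SP D₁ E₁) (h₂ : SP D₂ E₂) :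
    SP (D₁ ++ D₂) (E₁ ++ E₂) := by
  obtain ⟨M₁, r₁, p₁⟩ := h₁
  obtain ⟨M₂, r₂, p₂⟩ := h₂
  exact ⟨M₁ ++ M₂, r₁.append r₂, p₁.append p₂⟩

lemma SP.block {p : ℝ≥0} {a : A} {B : PDist A} (hne : B ≠ [])
    (hlab : ∀ x ∈ B, x.2 = a) (hsum : weight B = p) : SP [(p,a)] B :=
  SP.of_ref (by simpa using Ref.cons B hne hlab hsum Ref.nil)


/-! ### DEquiv machinery -/

lemma SimStep.symm {X Y : PDist A} (h : SimStep X Y) : SimStep Y X := by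
  rcases h with h | h | h
  · cases h with
    | mk E₁ E₂ p q a b => exact Or.inl (FlipS.mk E₁ E₂ q p b a)
  · cases h with
    | mk E₁ E₂ p q a => exact Or.inr (Or.inr (SplitS.mk E₁ E₂ p q a))
  · cases h with
    | mk E₁ E₂ p q a => exact Or.inr (Or.inl (JoinS.mk E₁ E₂ p q a))

lemma DEquiv.refl (D : PDist A) : DEquiv D D := ReflTransGen.refl

lemma DEquiv.trans {X Y Z : PDist A} (h₁ : DEquiv X Y) (h₂ : DEquiv Y Z) : DEquiv X Z :=
  ReflTransGen.trans h₁ h₂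

lemma DEquiv.symm {X Y : PDist A} (h : DEquiv X Y) : DEquiv Y X := by
  induction h with
  | refl => exact ReflTransGen.refl
  | tail _ hs ih => exact ReflTransGen.head hs.symm ih

lemma SimStep.context {X Y : PDist A} (L R : PDist A) (h : SimStep X Y) :
    SimStep (L ++ X ++ R) (L ++ Y ++ R) := by
  rcases h with h | h | h
  · cases h with
    | mk E₁ E₂ p q a b =>
      refine Or.inl ?_
      have := FlipS.mk (L ++ E₁) (E₂ ++ R) p q a b
      simpa [List.append_assoc] using this
  · cases h with
    | mk E₁ E₂ p q a =>
      refine Or.inr (Or.inl ?_)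
      have := JoinS.mk (L ++ E₁) (E₂ ++ R) p q a
      simpa [List.append_assoc] using this
  · cases h with
    | mk E₁ E₂ p q a =>
      refine Or.inr (Or.inr ?_)
      have := SplitS.mk (L ++ E₁) (E₂ ++ R) p q a
      simpa [List.append_assoc] using this

lemma DEquiv.context {X Y : PDist A} (L R : PDist A) (h : DEquiv X Y) :
    DEquiv (L ++ X ++ R) (L ++ Y ++ R) := by
  induction h with
  | refl => exact ReflTransGen.refl
  | tail _ hs ih => exact ih.tail (hs.context L R)

lemma DEquiv.append {X Y Z W : PDist A} (h₁ : DEquiv X Y) (h₂ : DEquiv Z W) :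
    DEquiv (X ++ Z) (Y ++ W) := by
  have a1 : DEquiv (X ++ Z) (Y ++ Z) := by simpa using DEquiv.context [] Z h₁
  have a2 : DEquiv (Y ++ Z) (Y ++ W) := by simpa using DEquiv.context Y [] h₂
  exact a1.trans a2

lemma DEquiv.of_perm {X Y : PDist A} (h : X.Perm Y) : DEquiv X Y := by
  induction h with
  | nil => exact ReflTransGen.refl
  | cons x _ ih => simpa using DEquiv.context [x] [] ih
  | swap x y l =>
    obtain ⟨p, a⟩ := x
    obtain ⟨q, b⟩ := y
    refine ReflTransGen.single (Or.inl ?_)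
    have := FlipS.mk [] l q p b a
    simpa using this
  | trans _ _ ih₁ ih₂ => exact ih₁.trans ih₂

lemma DEquiv.block_expand {a : A} : ∀ {B : PDist A}, B ≠ [] → (∀ x ∈ B, x.2 = a) →
    DEquiv [(weight B, a)] B := by
  intro B
  induction B with
  | nil => intro h; exact absurd rfl h
  | cons x B ih =>
    intro _ hlab
    have hx : x = (x.1, a) := by
      have := hlab x (List.mem_cons_self)
      exact Prod.ext rfl this
    rcases eq_or_ne B [] with rfl | hB
    · rw [hx]
      have hw : weight [((x.1 : ℝ≥0), a)] = x.1 := by simp [weight]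
      rw [hw]
      exact DEquiv.refl _
    · have step : SimStep [(weight (x :: B), a)] [(x.1, a), (weight B, a)] := by
        refine Or.inr (Or.inr ?_)
        have := SplitS.mk [] [] x.1 (weight B) a
        simpa [show weight (x :: B) = x.1 + weight B from rfl] using this
      refine ReflTransGen.head step ?_
      have := DEquiv.context [(x.1, a)] [] (ih hB (fun y hy => hlab y (List.mem_cons_of_mem _ hy)))
      rw [hx]
      simpa [DEquiv] using this

lemma DEquiv.of_ref {X Y : PDist A} (h : Ref X Y) : DEquiv X Y := by
  induction h with
  | nil => exact ReflTransGen.refl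
  | cons B hne hlab hsum hds ih =>
    rename_i p a ds E
    have h1 : DEquiv ((p,a) :: ds) ((p,a) :: E) := by
      simpa using DEquiv.context [(p,a)] [] ih
    have h2 : DEquiv ([(p,a)] ++ E) (B ++ E) := by
      refine DEquiv.append ?_ (DEquiv.refl E)
      rw [← hsum]
      exact DEquiv.block_expand hne hlab
    exact h1.trans h2

lemma SP.dequiv {X Y : PDist A} (h : SP X Y) : DEquiv X Y := by
  obtain ⟨M, r, p⟩ := h
  exact (DEquiv.of_ref r).trans (DEquiv.of_perm p)


/-! ### Common refinement of blocks -/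

lemma Ref.single_block {p : ℝ≥0} {a : A} {B : PDist A} (hne : B ≠ [])
    (hlab : ∀ x ∈ B, x.2 = a) (hsum : weight B = p) : Ref [(p,a)] B := by
  simpa using Ref.cons B hne hlab hsum Ref.nil

lemma common_block_aux (a : A) : ∀ (n : ℕ) (B₁ B₂ : PDist A), B₁.length + B₂.length ≤ n →
    B₁ ≠ [] → B₂ ≠ [] → (∀ x ∈ B₁, x.2 = a) → (∀ x ∈ B₂, x.2 = a) →
    weight B₁ = weight B₂ → ∃ C, Ref B₁ C ∧ Ref B₂ C := by
  intro n
  induction n with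
  | zero =>
    intro B₁ B₂ hlen h₁ h₂
    have := List.length_pos_iff.2 h₁
    omega
  | succ n ih =>
    rintro (_ | ⟨x, B₁'⟩) B₂ hlen h₁ h₂ hlab₁ hlab₂ hw
    · exact absurd rfl h₁
    rcases B₂ with _ | ⟨y, B₂'⟩
    · exact absurd rfl h₂
    have hx : x = (x.1, a) := Prod.ext rfl (hlab₁ x (List.mem_cons_self))
    have hy : y = (y.1, a) := Prod.ext rfl (hlab₂ y (List.mem_cons_self))
    rcases eq_or_ne B₁' [] with rfl | hB₁'
    · -- B₁ singleton
      refine ⟨y :: B₂', ?_, Ref.refl _⟩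
      rw [hx]
      refine Ref.single_block h₂ hlab₂ ?_
      rw [← hw, hx]
      simp [weight]
    rcases eq_or_ne B₂' [] with rfl | hB₂'
    · -- B₂ singleton
      refine ⟨x :: B₁', Ref.refl _, ?_⟩
      rw [hy]
      refine Ref.single_block h₁ hlab₁ ?_
      rw [hw, hy]
      simp [weight]
    have hlab₁' : ∀ z ∈ B₁', z.2 = a := fun z hz => hlab₁ z (List.mem_cons_of_mem _ hz)
    have hlab₂' : ∀ z ∈ B₂', z.2 = a := fun z hz => hlab₂ z (List.mem_cons_of_mem _ hz)
    have hw' : x.1 + weight B₁' = y.1 + weight B₂' := by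
      have e1 : weight (x :: B₁') = x.1 + weight B₁' := by
        rw [hx]; simp [weight]
      have e2 : weight (y :: B₂') = y.1 + weight B₂' := by
        rw [hy]; simp [weight]
      rw [← e1, ← e2, hw]
    rcases le_total x.1 y.1 with hle | hle
    · obtain ⟨d, hd⟩ := le_iff_exists_add.1 hle
      have hwd : weight B₁' = weight ((d, a) :: B₂') := by
        have : x.1 + weight B₁' = x.1 + (d + weight B₂') := by
          rw [hw', hd, add_assoc]
        have := add_left_cancel this
        simpa [weight] using this
      obtain ⟨C', r₁, r₂⟩ := ih B₁' ((d,a) :: B₂') (by simp at hlen ⊢; omega) hB₁'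
        (by simp) hlab₁' (by
          intro z hz
          rcases List.mem_cons.1 hz with rfl | hz
          · rfl
          · exact hlab₂' z hz) hwd
      cases r₂ with
      | cons Bd hneD hlabD hsumD hrest =>
        rename_i E''
        refine ⟨(x.1, a) :: (Bd ++ E''), ?_, ?_⟩
        · rw [hx]
          exact Ref.cons [(x.1,a)] (by simp) (by simp) (by simp [weight]) r₁
        · rw [hy, hd]
          refine Ref.cons ((x.1,a) :: Bd) (by simp) ?_ ?_ hrest
          · intro z hz
            rcases List.mem_cons.1 hz with rfl | hz
            · rfl
            · exact hlabD z hz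
          · simp [weight] at hsumD ⊢
            rw [hsumD]
    · obtain ⟨d, hd⟩ := le_iff_exists_add.1 hle
      have hwd : weight B₂' = weight ((d, a) :: B₁') := by
        have : y.1 + weight B₂' = y.1 + (d + weight B₁') := by
          rw [← hw', hd, add_assoc]
        have := add_left_cancel this
        simpa [weight] using this
      obtain ⟨C', r₂, r₁⟩ := ih B₂' ((d,a) :: B₁') (by simp at hlen ⊢; omega) hB₂'
        (by simp) hlab₂' (by
          intro z hz
          rcases List.mem_cons.1 hz with rfl | hz
          · rfl
          · exact hlab₁' z hz) hwd
      cases r₁ with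
      | cons Bd hneD hlabD hsumD hrest =>
        rename_i E''
        refine ⟨(y.1, a) :: (Bd ++ E''), ?_, ?_⟩
        · rw [hx, hd]
          refine Ref.cons ((y.1,a) :: Bd) (by simp) ?_ ?_ hrest
          · intro z hz
            rcases List.mem_cons.1 hz with rfl | hz
            · rfl
            · exact hlabD z hz
          · simp [weight] at hsumD ⊢
            rw [hsumD]
        · rw [hy]
          exact Ref.cons [(y.1,a)] (by simp) (by simp) (by simp [weight]) r₂

lemma common_block {a : A} {B₁ B₂ : PDist A} (h₁ : B₁ ≠ []) (h₂ : B₂ ≠ [])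
    (hlab₁ : ∀ x ∈ B₁, x.2 = a) (hlab₂ : ∀ x ∈ B₂, x.2 = a)
    (hw : weight B₁ = weight B₂) : ∃ C, Ref B₁ C ∧ Ref B₂ C :=
  common_block_aux a (B₁.length + B₂.length) B₁ B₂ le_rfl h₁ h₂ hlab₁ hlab₂ hw


/-! ### Confluence of refinement; common refinements for DEquiv -/

lemma Ref.confluence {D M₁ M₂ : PDist A} (h₁ : Ref D M₁) (h₂ : Ref D M₂) :
    ∃ N, SP M₁ N ∧ SP M₂ N := by
  induction h₁ generalizing M₂ with
  | nil => cases h₂; exact ⟨[], SP.refl _, SP.refl _⟩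
  | cons B₁ hne₁ hlab₁ hsum₁ h ih =>
    cases h₂ with
    | cons B₂ hne₂ hlab₂ hsum₂ h₂ =>
      obtain ⟨C, r₁, r₂⟩ := common_block hne₁ hne₂ hlab₁ hlab₂ (by rw [hsum₁, hsum₂])
      obtain ⟨N', s₁, s₂⟩ := ih h₂
      exact ⟨C ++ N', SP.append (SP.of_ref r₁) s₁, SP.append (SP.of_ref r₂) s₂⟩

lemma SP.confluence {D E₁ E₂ : PDist A} (h₁ : SP D E₁) (h₂ : SP D E₂) :
    ∃ C, SP E₁ C ∧ SP E₂ C := by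
  obtain ⟨M₁, r₁, p₁⟩ := h₁
  obtain ⟨M₂, r₂, p₂⟩ := h₂
  obtain ⟨N, s₁, s₂⟩ := Ref.confluence r₁ r₂
  exact ⟨N, (SP.of_perm p₁.symm).trans s₁, (SP.of_perm p₂.symm).trans s₂⟩

lemma FlipS.perm {X Y : PDist A} (h : FlipS X Y) : X.Perm Y := by
  cases h with
  | mk E₁ E₂ p q a b =>
    have := (List.Perm.swap (q,b) (p,a) E₂).append_left E₁
    simpa [List.append_assoc] using this

lemma JoinS.ref {X Y : PDist A} (h : JoinS X Y) : Ref Y X := by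
  cases h with
  | mk E₁ E₂ p q a =>
    refine Ref.append (Ref.append (Ref.refl E₁) ?_) (Ref.refl E₂)
    exact Ref.single_block (by simp) (by simp) (by simp [weight])

lemma SplitS.ref {X Y : PDist A} (h : SplitS X Y) : Ref X Y := by
  cases h with
  | mk E₁ E₂ p q a =>
    refine Ref.append (Ref.append (Ref.refl E₁) ?_) (Ref.refl E₂)
    exact Ref.single_block (by simp) (by simp) (by simp [weight])

lemma DEquiv.common_SP {D E : PDist A} (h : DEquiv D E) : ∃ C, SP D C ∧ SP E C := by
  induction h with
  | refl => exact ⟨D, SP.refl _, SP.refl _⟩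
  | tail _ hstep ih =>
    obtain ⟨C, hD, hX⟩ := ih
    rename_i X Y _
    have : SP X Y ∨ SP Y X := by
      rcases hstep with hs | hs | hs
      · exact Or.inl (SP.of_perm hs.perm)
      · exact Or.inr (SP.of_ref hs.ref)
      · exact Or.inl (SP.of_ref hs.ref)
    rcases this with hXY | hYX
    · obtain ⟨C', h₁, h₂⟩ := SP.confluence hXY hX
      exact ⟨C', hD.trans h₂, h₁⟩
    · exact ⟨C, hD, hYX.trans hX⟩


/-! ### Lifting PEvol along refinements -/

lemma Ref.pair (q s : ℝ≥0) (Y : PDist A) :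
    Ref (scale (q+s) Y) (Y.flatMap fun y => [(q*y.1, y.2), (s*y.1, y.2)]) := by
  induction Y with
  | nil => exact Ref.nil
  | cons y Y ih =>
    obtain ⟨r, c⟩ := y
    refine Ref.cons [(q*r,c),(s*r,c)] (by simp) (by simp) ?_ ih
    simp [weight, add_mul]

lemma perm_pair (q s : ℝ≥0) (Y : PDist A) :
    (Y.flatMap fun y => [(q*y.1, y.2), (s*y.1, y.2)]).Perm (scale q Y ++ scale s Y) := by
  induction Y with
  | nil => simp
  | cons y Y ih =>
    obtain ⟨r, c⟩ := y
    simp only [List.flatMap_cons, scale_cons, List.cons_append]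
    refine List.Perm.cons _ ?_
    refine (ih.cons _).trans ?_
    exact List.perm_middle.symm

lemma SP.pair (q s : ℝ≥0) (Y : PDist A) :
    SP (scale (q+s) Y) (scale q Y ++ scale s Y) :=
  ⟨_, Ref.pair q s Y, perm_pair q s Y⟩

lemma SP.scale_sum (Y : PDist A) : ∀ {B : PDist A}, B ≠ [] →
    SP (scale (weight B) Y) (B.flatMap fun x => scale x.1 Y) := by
  intro B
  induction B with
  | nil => intro hne; exact absurd rfl hne
  | cons x B ih =>
    intro _
    rcases eq_or_ne B [] with rfl | hB
    · simp [weight]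
      exact SP.refl _
    · have h1 : SP (scale (weight (x :: B)) Y) (scale x.1 Y ++ scale (weight B) Y) := by
        have : weight (x :: B) = x.1 + weight B := by simp [weight]
        rw [this]
        exact SP.pair _ _ Y
      refine h1.trans ?_
      simp only [List.flatMap_cons]
      exact SP.append (SP.refl _) (ih hB)

lemma PEvol.block_evolve {a : A} {Da : PDist A} (hrA : R a Da) :
    ∀ {B : PDist A}, (∀ x ∈ B, x.2 = a) → PEvol R B (B.flatMap fun x => scale x.1 Da) := by
  intro B
  induction B with
  | nil => intro _; exact PEvol.nil
  | cons x B ih =>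
    intro hlab
    have hx : x = (x.1, a) := Prod.ext rfl (hlab x (List.mem_cons_self))
    simp only [List.flatMap_cons]
    rw [hx]
    exact PEvol.evolve x.1 hrA (ih fun z hz => hlab z (List.mem_cons_of_mem _ hz))

lemma PEvol.ref_lift {D C X : PDist A} (hr : Ref D C) (he : PEvol R D X) :
    ∃ X', PEvol R C X' ∧ SP X X' := by
  induction hr generalizing X with
  | nil => cases he; exact ⟨[], PEvol.nil, SP.refl _⟩
  | cons B hne hlab hsum hds ih =>
    cases he with
    | keep p a h =>
      obtain ⟨X₀', hev, hsp⟩ := ih h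
      exact ⟨B ++ X₀', PEvol.append (PEvol.refl B) hev,
        SP.append (SP.block hne hlab hsum) hsp⟩
    | evolve p hrA h =>
      obtain ⟨X₀', hev, hsp⟩ := ih h
      refine ⟨(B.flatMap fun x => scale x.1 _) ++ X₀',
        PEvol.append (PEvol.block_evolve hrA hlab) hev, SP.append ?_ hsp⟩
      rw [← hsum]
      exact SP.scale_sum _ hne

lemma PEvol.cons_inv {x : ℝ≥0 × A} {D X : PDist A} (he : PEvol R (x :: D) X) :
    ∃ Bx X₀, X = Bx ++ X₀ ∧ PEvol R D X₀ ∧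
      (∀ ds X₀', PEvol R ds X₀' → PEvol R (x :: ds) (Bx ++ X₀')) := by
  cases he with
  | keep p a h =>
    exact ⟨[(p,a)], _, rfl, h, fun ds X₀' h' => PEvol.keep p a h'⟩
  | evolve p hrA h =>
    exact ⟨scale p _, _, rfl, h, fun ds X₀' h' => PEvol.evolve p hrA h'⟩

lemma perm_swap_blocks (B₁ B₂ X : PDist A) :
    (B₁ ++ (B₂ ++ X)).Perm (B₂ ++ (B₁ ++ X)) := by
  rw [← List.append_assoc, ← List.append_assoc]
  exact List.perm_append_comm.append_right X

lemma PEvol.perm_lift {D C X : PDist A} (hp : D.Perm C) (he : PEvol R D X) :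
    ∃ X', PEvol R C X' ∧ X.Perm X' := by
  induction hp generalizing X with
  | nil => cases he; exact ⟨[], PEvol.nil, List.Perm.refl _⟩
  | cons x _ ih =>
    obtain ⟨Bx, X₀, rfl, h₀, hrep⟩ := PEvol.cons_inv he
    obtain ⟨X₀', hev, hperm⟩ := ih h₀
    exact ⟨Bx ++ X₀', hrep _ _ hev, hperm.append_left Bx⟩
  | swap x y l =>
    obtain ⟨By, rest, rfl, h₁, hrepy⟩ := PEvol.cons_inv he
    obtain ⟨Bx, X₀, rfl, h₀, hrepx⟩ := PEvol.cons_inv h₁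
    exact ⟨Bx ++ (By ++ X₀), hrepx _ _ (hrepy _ _ h₀), perm_swap_blocks By Bx X₀⟩
  | trans _ _ ih₁ ih₂ =>
    obtain ⟨X₁, hev₁, hp₁⟩ := ih₁ he
    obtain ⟨X₂, hev₂, hp₂⟩ := ih₂ hev₁
    exact ⟨X₂, hev₂, hp₁.trans hp₂⟩

lemma SP.lift {D C X : PDist A} (hsp : SP D C) (he : PEvol R D X) :
    ∃ X', PEvol R C X' ∧ SP X X' := by
  obtain ⟨M, hr, hp⟩ := hsp
  obtain ⟨X₁, hev₁, hsp₁⟩ := PEvol.ref_lift hr he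
  obtain ⟨X₂, hev₂, hp₂⟩ := PEvol.perm_lift hp hev₁
  exact ⟨X₂, hev₂, hsp₁.trans (SP.of_perm hp₂)⟩

lemma SP.liftS {D C E : PDist A} (hsp : SP D C) (he : ReflTransGen (PEvol R) D E) :
    ∃ E', ReflTransGen (PEvol R) C E' ∧ SP E E' := by
  induction he with
  | refl => exact ⟨C, ReflTransGen.refl, hsp⟩
  | tail _ hstep ih =>
    obtain ⟨X', hev, hsp'⟩ := ih
    obtain ⟨E', hev', hsp''⟩ := SP.lift hsp' hstep
    exact ⟨E', hev.tail hev', hsp''⟩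


/-! ### Replay helpers -/

lemma weight_map_mul (r : ℝ≥0) (c : A) (B : PDist A) :
    weight (B.map fun x => (x.1 * r, c)) = weight B * r := by
  induction B with
  | nil => simp [weight]
  | cons x B ih => simp [weight, add_mul] at ih ⊢; rw [ih]

lemma map_id_of_label {c : A} : ∀ {B : PDist A}, (∀ x ∈ B, x.2 = c) →
    B.map (fun x => (x.1, c)) = B := by
  intro B
  induction B with
  | nil => intro _; rfl
  | cons x B ih =>
    intro hlab
    have hx : x = (x.1, c) := Prod.ext rfl (hlab x (List.mem_cons_self))
    simp only [List.map_cons]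
    rw [← hx, ih fun z hz => hlab z (List.mem_cons_of_mem _ hz)]

lemma Ref.mul_relabel (r : ℝ≥0) (c : A) {X Y : PDist A} (h : Ref X Y) :
    Ref (X.map fun x => (x.1 * r, c)) (Y.map fun x => (x.1 * r, c)) := by
  induction h with
  | nil => exact Ref.nil
  | cons B hne hlab hsum hds ih =>
    rw [List.map_append, List.map_cons]
    refine Ref.cons _ (by simpa using hne)
      (fun z hz => by obtain ⟨x, hx, rfl⟩ := List.mem_map.1 hz; rfl) ?_ ih
    rw [weight_map_mul, hsum]

lemma weight_replicate_zero (n : ℕ) (c : A) :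
    weight (List.replicate n ((0:ℝ≥0), c)) = 0 := by
  induction n with
  | zero => rfl
  | succ n ih => simpa [weight, List.replicate_succ] using ih

lemma Ref.pad {a : A} (t : ℕ) : ∀ {C : PDist A}, C ≠ [] → (∀ x ∈ C, x.2 = a) →
    Ref C (C ++ List.replicate t ((0:ℝ≥0), a)) := by
  intro C
  induction C with
  | nil => intro hne; exact absurd rfl hne
  | cons x C ih =>
    intro _ hlab
    have hx : x = (x.1, a) := Prod.ext rfl (hlab x (List.mem_cons_self))
    rcases eq_or_ne C [] with rfl | hC
    · rw [hx]
      refine Ref.single_block (by simp) ?_ ?_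
      · intro z hz
        rcases List.mem_cons.1 hz with rfl | hz
        · rfl
        · rw [List.eq_of_mem_replicate hz]
      · simp [weight, weight_replicate_zero]
    · have := ih hC (fun z hz => hlab z (List.mem_cons_of_mem _ hz))
      rw [hx]
      have goal : Ref ((x.1, a) :: C) ([(x.1,a)] ++ (C ++ List.replicate t ((0:ℝ≥0), a))) :=
        Ref.cons [(x.1,a)] (by simp) (by simp) (by simp [weight]) this
      simpa using goal

lemma Ref.replicate_zero {c : A} : ∀ {m n : ℕ}, 1 ≤ m → m ≤ n →
    Ref (List.replicate m ((0:ℝ≥0), c)) (List.replicate n ((0:ℝ≥0), c)) := by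
  intro m
  induction m with
  | zero => intro n h _; omega
  | succ m ih =>
    intro n _ hmn
    rcases Nat.eq_zero_or_pos m with rfl | hm
    · have hn : 0 < n := by omega
      have h1 : (List.replicate n ((0:ℝ≥0),c)) ≠ [] := by
        apply List.ne_nil_of_length_pos
        simpa using hn
      have := Ref.single_block (p := 0) (a := c) h1
        (fun z hz => by rw [List.eq_of_mem_replicate hz]) (weight_replicate_zero n c)
      simpa using this
    · obtain ⟨n', rfl⟩ : ∃ n', n = n' + 1 := ⟨n - 1, by omega⟩
      rw [List.replicate_succ, List.replicate_succ (n := n')]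
      have goal : Ref (((0:ℝ≥0),c) :: List.replicate m ((0:ℝ≥0),c))
          ([((0:ℝ≥0),c)] ++ List.replicate n' ((0:ℝ≥0),c)) :=
        Ref.cons [((0:ℝ≥0),c)] (by simp) (by simp) (by simp [weight]) (ih hm (by omega))
      simpa using goal

lemma all_zero_of_weight_zero : ∀ {B : PDist A}, weight B = 0 → ∀ x ∈ B, x.1 = 0 := by
  intro B
  induction B with
  | nil => intro _ x hx; cases hx
  | cons y B ih =>
    intro hw x hx
    have h1 : y.1 + weight B = 0 := by simpa [weight] using hw
    have h2 : y.1 = 0 := by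
      have := add_eq_zero.1 h1
      exact this.1
    rcases List.mem_cons.1 hx with rfl | hx
    · exact h2
    · exact ih (add_eq_zero.1 h1).2 x hx

lemma block_eq_replicate {c : A} {B : PDist A} (hlab : ∀ x ∈ B, x.2 = c)
    (hw : weight B = 0) : B = List.replicate B.length ((0:ℝ≥0), c) := by
  refine List.eq_replicate_of_mem ?_
  intro z hz
  have h1 := all_zero_of_weight_zero hw z hz
  have h2 := hlab z hz
  exact Prod.ext h1 h2

lemma perm_flatMap_cons {β : Type} (g : β → ℝ≥0 × A) (hf : β → PDist A) :
    ∀ (l : List β), (l.flatMap fun b => g b :: hf b).Perm (l.map g ++ l.flatMap hf) := by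
  intro l
  induction l with
  | nil => simp
  | cons b l ih =>
    simp only [List.flatMap_cons, List.map_cons, List.cons_append]
    refine List.Perm.cons _ ?_
    refine ((ih.append_left (hf b)).trans ?_)
    exact perm_swap_blocks (hf b) (l.map g) _

lemma perm_flatMap_swap {β γ : Type} (f : β → γ → ℝ≥0 × A) :
    ∀ (l₁ : List β) (l₂ : List γ),
      (l₁.flatMap fun a => l₂.map (f a)).Perm (l₂.flatMap fun b => l₁.map fun a => f a b) := by
  intro l₁
  induction l₁ with
  | nil => intro l₂; simp
  | cons a l₁ ih =>
    intro l₂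
    simp only [List.flatMap_cons, List.map_cons]
    refine List.Perm.trans ?_ (perm_flatMap_cons (fun b => f a b) (fun b => l₁.map fun a => f a b) l₂).symm
    exact (ih l₂).append_left _


/-! ### The core replay construction -/

lemma core_replay {p : ℝ≥0} {a : A} :
    ∀ (Da : PDist A) {M C₀ : PDist A}, Ref (scale p Da) M →
      C₀ ≠ [] → (∀ x ∈ C₀, x.2 = a) → weight C₀ = p →
      ∃ C, Ref C₀ C ∧
        Ref M (Da.flatMap fun y => C.map fun x => (x.1 * y.1, y.2)) := by
  intro Da
  induction Da with
  | nil =>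
    intro M C₀ hM _ _ _
    cases hM
    exact ⟨C₀, Ref.refl _, Ref.nil⟩
  | cons y Da ih =>
    obtain ⟨r, c⟩ := y
    intro M C₀ hM hne₀ hlab₀ hw₀
    rw [scale_cons] at hM
    cases hM with
    | cons B hneB hlabB hsumB hrest =>
      rename_i M'
      rcases eq_or_ne r 0 with rfl | hr
      · -- zero-weight element: B is a block of zeros
        have hBw : weight B = 0 := by simpa using hsumB
        have hBrep := block_eq_replicate hlabB hBw
        -- pad C₀ with |B| zeros
        set C₁ := C₀ ++ List.replicate B.length ((0:ℝ≥0), a) with hC₁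
        have hpad : Ref C₀ C₁ := Ref.pad _ hne₀ hlab₀
        have hne₁ : C₁ ≠ [] := by
          simp [hC₁]
          intro h; exact absurd h hne₀
        have hlab₁ : ∀ x ∈ C₁, x.2 = a := by
          intro x hx
          rcases List.mem_append.1 hx with hx | hx
          · exact hlab₀ x hx
          · rw [List.eq_of_mem_replicate hx]
        have hw₁ : weight C₁ = p := by
          rw [hC₁]
          simp [weight_replicate_zero, hw₀]
        obtain ⟨C, hC₁C, hMref⟩ := ih hrest hne₁ hlab₁ hw₁
        refine ⟨C, hpad.trans hC₁C, ?_⟩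
        simp only [List.flatMap_cons]
        refine Ref.append ?_ hMref
        have hmap : (C.map fun x => (x.1 * 0, c)) = List.replicate C.length ((0:ℝ≥0), c) := by
          have hlen : (C.map fun x => (x.1 * 0, c)).length = C.length := List.length_map _
          rw [← hlen]
          apply List.eq_replicate_of_mem
          intro z hz
          obtain ⟨x, hx, rfl⟩ := List.mem_map.1 hz
          simp
        rw [hBrep, hmap]
        refine Ref.replicate_zero ?_ ?_
        · have := List.length_pos_iff.2 hneB
          omega
        · have h1 := hpad.length_le
          have h2 := hC₁C.length_le
          have h3 : C₁.length = C₀.length + B.length := by simp [hC₁]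
          omega
      · -- nonzero element: divide B by r and take common refinement with C₀
        set B' := B.map (fun x => (x.1 * r⁻¹, a)) with hB'
        have hneB' : B' ≠ [] := by
          simp [hB']
          intro h; exact absurd h hneB
        have hlabB' : ∀ x ∈ B', x.2 = a := by
          intro x hx
          obtain ⟨z, hz, rfl⟩ := List.mem_map.1 hx
          rfl
        have hwB' : weight B' = p := by
          rw [hB', weight_map_mul, hsumB, mul_assoc, mul_inv_cancel₀ hr, mul_one]
        obtain ⟨C₁, hr₁, hr₂⟩ := common_block hne₀ hneB' hlab₀ hlabB' (by rw [hw₀, hwB'])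
        have hne₁ : C₁ ≠ [] := hr₁.ne_nil hne₀
        have hlab₁ : ∀ x ∈ C₁, x.2 = a := by
          intro x hx
          obtain ⟨z, hz, hzx⟩ := hr₁.mem_label x hx
          rw [hzx]; exact hlab₀ z hz
        have hw₁ : weight C₁ = p := by rw [hr₁.weight_eq, hw₀]
        obtain ⟨C, hC₁C, hMref⟩ := ih hrest hne₁ hlab₁ hw₁
        refine ⟨C, hr₁.trans hC₁C, ?_⟩
        simp only [List.flatMap_cons]
        refine Ref.append ?_ hMref
        -- Ref B (C.map fun x => (x.1 * r, c))
        have hBC : Ref B' C := hr₂.trans hC₁C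
        have := hBC.mul_relabel r c
        have hcollapse : (B'.map fun x => (x.1 * r, c)) = B := by
          rw [hB', List.map_map]
          have : ∀ z ∈ B, ((fun x => (x.1 * r, c)) ∘ (fun x : ℝ≥0 × A => (x.1 * r⁻¹, a))) z
              = (z.1, c) := by
            intro z hz
            simp [Function.comp, mul_assoc, inv_mul_cancel₀ hr]
          rw [List.map_congr_left this, map_id_of_label hlabB]
        rwa [hcollapse] at this


/-! ### Replay: backward refinement across a PEvol step -/

lemma PEvol.ref_replay {D X M : PDist A} (he : PEvol R D X) (hr : Ref X M) :
    ∃ D' M', SP D D' ∧ PEvol R D' M' ∧ SP M M' := by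
  induction he generalizing M with
  | nil =>
    cases hr
    exact ⟨[], [], SP.refl _, PEvol.nil, SP.refl _⟩
  | keep p a hds ih =>
    cases hr with
    | cons B hne hlab hsum hrest =>
      obtain ⟨D₀', M₀', hsp₀, hev₀, hspM₀⟩ := ih hrest
      refine ⟨B ++ D₀', B ++ M₀', ?_, PEvol.append (PEvol.refl B) hev₀,
        SP.append (SP.refl B) hspM₀⟩
      exact SP.append (SP.block hne hlab hsum) hsp₀
  | evolve p hrA hds ih =>
    rename_i a Da ds ds'
    obtain ⟨M₁, M₀, rfl, hrM₁, hrM₀⟩ := Ref.append_inv hr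
    obtain ⟨D₀', M₀', hsp₀, hev₀, hspM₀⟩ := ih hrM₀
    obtain ⟨C, hC, hMref⟩ := core_replay (p := p) (a := a) Da hrM₁ (C₀ := [(p,a)]) (by simp) (by simp)
      (by simp [weight])
    have hlabC : ∀ x ∈ C, x.2 = a := by
      intro x hx
      obtain ⟨z, hz, hzx⟩ := hC.mem_label x hx
      rw [hzx]
      simpa using (List.mem_singleton.1 hz) ▸ rfl
    refine ⟨C ++ D₀', (C.flatMap fun x => scale x.1 Da) ++ M₀',
      SP.append (SP.of_ref hC) hsp₀,
      PEvol.append (PEvol.block_evolve hrA hlabC) hev₀,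
      SP.append ?_ hspM₀⟩
    refine SP.trans (SP.of_ref hMref) (SP.of_perm ?_)
    exact perm_flatMap_swap (fun x y => (x.1 * y.1, y.2)) C Da |>.symm

lemma PEvol.sp_replay {D X W : PDist A} (he : PEvol R D X) (hsp : SP X W) :
    ∃ D' W', SP D D' ∧ PEvol R D' W' ∧ SP W W' := by
  obtain ⟨M, hr, hp⟩ := hsp
  obtain ⟨D', M', hsp₁, hev, hsp₂⟩ := PEvol.ref_replay he hr
  exact ⟨D', M', hsp₁, hev, (SP.of_perm hp.symm).trans hsp₂⟩


/-! ### Red closure lemmas -/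

lemma RedS.of_pevolS {D E : PDist A} (h : ReflTransGen (PEvol R) D E) :
    ReflTransGen (Red R) D E := by
  induction h with
  | refl => exact ReflTransGen.refl
  | tail _ hstep ih => exact ih.tail (Or.inl hstep)

lemma RedS.of_dequiv {D E : PDist A} (h : DEquiv D E) :
    ReflTransGen (Red R) D E := ReflTransGen.single (Or.inr h)

lemma RedS.context {X Y : PDist A} (L Rr : PDist A) (h : ReflTransGen (Red R) X Y) :
    ReflTransGen (Red R) (L ++ X ++ Rr) (L ++ Y ++ Rr) := by
  induction h with
  | refl => exact ReflTransGen.refl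
  | tail _ hstep ih =>
    refine ih.tail ?_
    rcases hstep with hstep | hstep
    · exact Or.inl (PEvol.append (PEvol.append (PEvol.refl L) hstep) (PEvol.refl Rr))
    · exact Or.inr (hstep.context L Rr)

lemma SimStep.smul {X Y : PDist A} (α : ℝ≥0) (h : SimStep X Y) :
    SimStep (scale α X) (scale α Y) := by
  rcases h with hs | hs | hs
  · cases hs with
    | mk E₁ E₂ p q a b =>
      refine Or.inl ?_
      have := FlipS.mk (scale α E₁) (scale α E₂) (α*p) (α*q) a b
      simpa using this
  · cases hs with
    | mk E₁ E₂ p q a =>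
      refine Or.inr (Or.inl ?_)
      have := JoinS.mk (scale α E₁) (scale α E₂) (α*p) (α*q) a
      simpa [mul_add] using this
  · cases hs with
    | mk E₁ E₂ p q a =>
      refine Or.inr (Or.inr ?_)
      have := SplitS.mk (scale α E₁) (scale α E₂) (α*p) (α*q) a
      simpa [mul_add] using this

lemma DEquiv.smul {X Y : PDist A} (α : ℝ≥0) (h : DEquiv X Y) :
    DEquiv (scale α X) (scale α Y) := by
  induction h with
  | refl => exact ReflTransGen.refl
  | tail _ hstep ih => exact ih.tail (hstep.smul α)

lemma RedS.smul {X Y : PDist A} (α : ℝ≥0) (h : ReflTransGen (Red R) X Y) :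
    ReflTransGen (Red R) (scale α X) (scale α Y) := by
  induction h with
  | refl => exact ReflTransGen.refl
  | tail _ hstep ih =>
    refine ih.tail ?_
    rcases hstep with hstep | hstep
    · exact Or.inl (hstep.smul α)
    · exact Or.inr (hstep.smul α)

/-! ### Pure peaks close -/

lemma peak_pevol
    (h : ∀ (a : A) (E F : PDist A),
      ReflTransGen (PEvol R) [(1, a)] E → ReflTransGen (PEvol R) [(1, a)] F →
      ∃ C, ReflTransGen (Red R) E C ∧ ReflTransGen (Red R) F C) :
    ∀ (D E F : PDist A), ReflTransGen (PEvol R) D E → ReflTransGen (PEvol R) D F →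
      ∃ C, ReflTransGen (Red R) E C ∧ ReflTransGen (Red R) F C := by
  intro D
  induction D with
  | nil =>
    intro E F hE hF
    rw [PEvolS.nil_inv hE, PEvolS.nil_inv hF]
    exact ⟨[], ReflTransGen.refl, ReflTransGen.refl⟩
  | cons x D ih =>
    obtain ⟨p, a⟩ := x
    intro E F hE hF
    have hcons : ((p,a) :: D : PDist A) = [(p,a)] ++ D := rfl
    rw [hcons] at hE hF
    obtain ⟨e₁, e₂, rfl, he₁, he₂⟩ := PEvolS.append_inv hE
    obtain ⟨f₁, f₂, rfl, hf₁, hf₂⟩ := PEvolS.append_inv hF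
    obtain ⟨E₁, rfl, hE₁⟩ := PEvolS.single_src he₁
    obtain ⟨F₁, rfl, hF₁⟩ := PEvolS.single_src hf₁
    obtain ⟨C₁, hc₁, hc₂⟩ := h a E₁ F₁ hE₁ hF₁
    obtain ⟨C₂, hd₁, hd₂⟩ := ih e₂ f₂ he₂ hf₂
    refine ⟨scale p C₁ ++ C₂, ?_, ?_⟩
    · have s1 : ReflTransGen (Red R) (scale p E₁ ++ e₂) (scale p C₁ ++ e₂) := by
        have := RedS.context [] e₂ (RedS.smul p hc₁)
        simpa using this
      have s2 : ReflTransGen (Red R) (scale p C₁ ++ e₂) (scale p C₁ ++ C₂) := by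
        have := RedS.context (scale p C₁) [] hd₁
        simpa using this
      exact s1.trans s2
    · have s1 : ReflTransGen (Red R) (scale p F₁ ++ f₂) (scale p C₁ ++ f₂) := by
        have := RedS.context [] f₂ (RedS.smul p hc₂)
        simpa using this
      have s2 : ReflTransGen (Red R) (scale p C₁ ++ f₂) (scale p C₁ ++ C₂) := by
        have := RedS.context (scale p C₁) [] hd₂
        simpa using this
      exact s1.trans s2

/-! ### Standardisation -/

lemma std {D E : PDist A} (h : ReflTransGen (Red R) D E) :
    ∃ D' E', DEquiv D D' ∧ ReflTransGen (PEvol R) D' E' ∧ DEquiv E' E := by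
  induction h using ReflTransGen.head_induction_on with
  | refl => exact ⟨E, E, DEquiv.refl E, ReflTransGen.refl, DEquiv.refl E⟩
  | head hstep _ ih =>
    obtain ⟨X₁, E₁, hXX₁, hev, hE⟩ := ih
    rcases hstep with hstep | hstep
    · -- a PEvol step first
      obtain ⟨C, hXC, hX₁C⟩ := DEquiv.common_SP hXX₁
      obtain ⟨E₁', hevC, hspE₁⟩ := SP.liftS hX₁C hev
      obtain ⟨D'', C'', hspD, hevD, hspC⟩ := PEvol.sp_replay hstep hXC
      obtain ⟨E₁'', hevC'', hspE₁'⟩ := SP.liftS hspC hevC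
      refine ⟨D'', E₁'', hspD.dequiv, ReflTransGen.head hevD hevC'', ?_⟩
      exact (hspE₁'.dequiv.symm.trans hspE₁.dequiv.symm).trans hE
    · exact ⟨X₁, E₁, hstep.trans hXX₁, hev, hE⟩

end PPARS
open PPARS Relation in
/-- Dirac confluence criterion: closing all purely-`⇒_P*` peaks from Dirac
distributions implies distribution confluence. -/
theorem dirac_confluence {A : Type} (R : A → PDist A → Prop) (hR : IsPARS R)
    (h : ∀ (a : A) (E F : PDist A),
      ReflTransGen (PEvol R) [(1, a)] E → ReflTransGen (PEvol R) [(1, a)] F →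
      ∃ C, ReflTransGen (Red R) E C ∧ ReflTransGen (Red R) F C) :
    Confluent (Red R) := by
  intro D b c hab hac
  obtain ⟨D₁, E₁, hD₁, hev₁, hEb⟩ := std hab
  obtain ⟨D₂, F₁, hD₂, hev₂, hFc⟩ := std hac
  obtain ⟨C, hC₁, hC₂⟩ := DEquiv.common_SP (hD₁.symm.trans hD₂)
  obtain ⟨E₁', hevE, hspE⟩ := SP.liftS hC₁ hev₁
  obtain ⟨F₁', hevF, hspF⟩ := SP.liftS hC₂ hev₂
  obtain ⟨W, hW₁, hW₂⟩ := peak_pevol h C E₁' F₁' hevE hevF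
  refine ⟨W, ?_, ?_⟩
  · exact (RedS.of_dequiv ((hEb.symm.trans hspE.dequiv))).trans hW₁
  · exact (RedS.of_dequiv ((hFc.symm.trans hspF.dequiv))).trans hW₂
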